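/- Let p₁,…,p_n be i.i.d. Uniform(0,1) (n ≥ 2) and define the statistic Z_n = n·K_2(1/n, p_(1)) = (1/2)·n·(1/n − p_(1))²/(p_(1)(1−p_(1))), where p_(1) is the minimum. Then the limiting tail satisfies: n·p_(1) converges in distribution to an Exponential(1) random variable E, the statistic converges in distribution to (1/2)(1/√E − √E)², and P((1/2)(1/√E − √E)² ≥ z) ~ 1/(2z) as z → ∞. -/

import Mathlib

open MeasureTheory ProbabilityTheory Real Set Filter Topology

/-- The limiting function `g(E) = (1/2)(1/√E − √E)²`. -/
noncomputable def heavyTailFun (x : ℝ) : ℝ :=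
  (1 / 2) * (1 / Real.sqrt x - Real.sqrt x) ^ 2


-- aux 1: (1 - t n)^n → exp(-a)
lemma aux_tendsto_pow_exp {t : ℕ → ℝ} {a : ℝ}
    (h : Tendsto (fun n : ℕ => (n : ℝ) * t n) atTop (𝓝 a))
    (ht : ∀ᶠ n in atTop, 0 ≤ t n ∧ t n < 1) :
    Tendsto (fun n : ℕ => (1 - t n) ^ n) atTop (𝓝 (Real.exp (-a))) := by
  have ht0 : Tendsto t atTop (𝓝 0) := by
    have h2 : Tendsto (fun n : ℕ => ((n : ℝ) * t n) * (n : ℝ)⁻¹) atTop (𝓝 (a * 0)) :=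
      h.mul (tendsto_natCast_atTop_atTop (R := ℝ)).inv_tendsto_atTop
    rw [mul_zero] at h2
    apply h2.congr'
    filter_upwards [eventually_ge_atTop 1] with n hn
    have : (n : ℝ) ≠ 0 := by positivity
    field_simp
  have hlog : Tendsto (fun n : ℕ => (n : ℝ) * Real.log (1 - t n)) atTop (𝓝 (-a)) := by
    have hlo : Tendsto (fun n : ℕ => (-((n : ℝ) * t n)) * (1 - t n)⁻¹) atTop (𝓝 (-a)) := by
      have : Tendsto (fun n : ℕ => (1 - t n)⁻¹) atTop (𝓝 1) := by
        have := (tendsto_const_nhds (x := (1:ℝ)) (f := atTop (α := ℕ))).sub ht0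
        rw [sub_zero] at this
        simpa using this.inv₀ (by norm_num)
      simpa using (h.neg.mul this)
    have hhi : Tendsto (fun n : ℕ => -((n : ℝ) * t n)) atTop (𝓝 (-a)) := h.neg
    refine tendsto_of_tendsto_of_tendsto_of_le_of_le' hlo hhi ?_ ?_
    · filter_upwards [ht] with n hn
      have h1 : (0:ℝ) < 1 - t n := by linarith [hn.2]
      have h2 : Real.log (1 - t n)⁻¹ ≤ (1 - t n)⁻¹ - 1 :=
        Real.log_le_sub_one_of_pos (by positivity)
      rw [Real.log_inv] at h2
      have h3 : -((1 - t n)⁻¹ - 1) ≤ Real.log (1 - t n) := by linarith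
      have h4 : (1 - t n)⁻¹ - 1 = t n * (1 - t n)⁻¹ := by field_simp; ring
      calc -((n:ℝ) * t n) * (1 - t n)⁻¹ = (n:ℝ) * (-((1 - t n)⁻¹ - 1)) := by rw [h4]; ring
      _ ≤ (n:ℝ) * Real.log (1 - t n) := by
          apply mul_le_mul_of_nonneg_left h3 (Nat.cast_nonneg n)
    · filter_upwards [ht] with n hn
      have h1 : (0:ℝ) < 1 - t n := by linarith [hn.2]
      have h2 : Real.log (1 - t n) ≤ (1 - t n) - 1 := Real.log_le_sub_one_of_pos h1
      have := mul_le_mul_of_nonneg_left h2 (Nat.cast_nonneg (α := ℝ) n)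
      calc (n:ℝ) * Real.log (1 - t n) ≤ (n:ℝ) * ((1 - t n) - 1) := this
      _ = -((n:ℝ) * t n) := by ring
  have := (Real.continuous_exp.tendsto _).comp hlog
  apply this.congr'
  filter_upwards [ht] with n hn
  have h1 : (0:ℝ) < 1 - t n := by linarith [hn.2]
  simp only [Function.comp_apply]
  rw [Real.exp_nat_mul, Real.exp_log h1]


lemma aux_exists_min {n : ℕ} (hn : 0 < n) (f : Fin n → ℝ) :
    ∃ j, (⨅ i, f i) = f j ∧ ∀ i, f j ≤ f i := by
  haveI : Nonempty (Fin n) := ⟨⟨0, hn⟩⟩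
  obtain ⟨j, hj⟩ := Finite.exists_min f
  exact ⟨j, le_antisymm (ciInf_le (Finite.bddBelow_range f) j) (le_ciInf hj), hj⟩

lemma aux_lt_iInf {n : ℕ} (hn : 0 < n) (f : Fin n → ℝ) (t : ℝ) :
    t < (⨅ i, f i) ↔ ∀ i, t < f i := by
  obtain ⟨j, hj1, hj2⟩ := aux_exists_min hn f
  rw [hj1]
  exact ⟨fun h i => lt_of_lt_of_le h (hj2 i), fun h => h j⟩

lemma aux_le_iInf {n : ℕ} (hn : 0 < n) (f : Fin n → ℝ) (t : ℝ) :
    t ≤ (⨅ i, f i) ↔ ∀ i, t ≤ f i := by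
  obtain ⟨j, hj1, hj2⟩ := aux_exists_min hn f
  rw [hj1]
  exact ⟨fun h i => le_trans h (hj2 i), fun h => h j⟩

lemma aux_meas_all {Ω : Type*} [MeasurableSpace Ω]
    (μ : Measure Ω) [IsProbabilityMeasure μ]
    (p : ℕ → Ω → ℝ) (hmeas : ∀ i, Measurable (p i))
    (hindep : iIndepFun (m := fun _ => (inferInstance : MeasurableSpace ℝ)) p μ)
    (n : ℕ) (S : Set ℝ) (hS : MeasurableSet S) :
    μ {ω | ∀ i : Fin n, p i ω ∈ S} = ∏ i ∈ Finset.range n, μ (p i ⁻¹' S) := by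
  have hset : {ω | ∀ i : Fin n, p i ω ∈ S} = ⋂ i ∈ Finset.range n, p i ⁻¹' S := by
    ext ω
    simp only [mem_setOf_eq, mem_iInter, Finset.mem_range, mem_preimage]
    exact ⟨fun h i hi => h ⟨i, hi⟩, fun h i => h i i.2⟩
  rw [hset]
  exact hindep.meas_biInter (fun i _ => ⟨S, hS, rfl⟩)

lemma aux_map_apply {Ω : Type*} [MeasurableSpace Ω]
    (μ : Measure Ω) (p : Ω → ℝ) (hm : Measurable p)
    (hu : Measure.map p μ = volume.restrict (Set.Ioo (0:ℝ) 1))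
    (S : Set ℝ) (hS : MeasurableSet S) :
    μ (p ⁻¹' S) = volume (S ∩ Ioo 0 1) := by
  rw [← Measure.map_apply hm hS, hu, Measure.restrict_apply hS]


lemma aux_expMeasure_Iic (x : ℝ) :
    expMeasure 1 (Iic x) = ENNReal.ofReal (if 0 ≤ x then 1 - Real.exp (-x) else 0) := by
  rw [expMeasure, gammaMeasure, withDensity_apply _ measurableSet_Iic]
  have h : ∀ y, gammaPDF 1 1 y = exponentialPDF 1 y := fun y => rfl
  simp_rw [h]
  rw [lintegral_exponentialPDF_eq_antiDeriv one_pos x]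
  simp

lemma aux_expMeasure_singleton (x : ℝ) : expMeasure 1 {x} = 0 := by
  rw [expMeasure, gammaMeasure]
  exact withDensity_absolutelyContinuous _ _ (volume_singleton)

lemma aux_expMeasure_Iic_zero : expMeasure 1 (Iic (0:ℝ)) = 0 := by
  rw [aux_expMeasure_Iic]; simp

lemma aux_expMeasure_Ioc {a b : ℝ} (ha : 0 ≤ a) (hab : a ≤ b) :
    expMeasure 1 (Ioc a b) = ENNReal.ofReal (Real.exp (-a) - Real.exp (-b)) := by
  have hu : Iic a ∪ Ioc a b = Iic b := Iic_union_Ioc_eq_Iic hab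
  have hdisj : Disjoint (Iic a) (Ioc a b) := Iic_disjoint_Ioc le_rfl
  have hadd := (measure_union (μ := expMeasure 1) hdisj measurableSet_Ioc).symm
  rw [hu, aux_expMeasure_Iic, aux_expMeasure_Iic, if_pos ha, if_pos (le_trans ha hab)] at hadd
  have h1 : Real.exp (-b) ≤ Real.exp (-a) := Real.exp_le_exp.2 (by linarith)
  have h2 : Real.exp (-a) ≤ 1 := Real.exp_le_one_iff.2 (by linarith)
  have hsplit : 1 - Real.exp (-b) = (1 - Real.exp (-a)) + (Real.exp (-a) - Real.exp (-b)) := by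
    ring
  rw [hsplit, ENNReal.ofReal_add (by linarith) (by linarith)] at hadd
  exact (ENNReal.add_right_inj (by simp)).mp hadd

lemma aux_expMeasure_Icc {a b : ℝ} (ha : 0 < a) (hab : a ≤ b) :
    (expMeasure 1 (Icc a b)).toReal = Real.exp (-a) - Real.exp (-b) := by
  have h1 : expMeasure 1 (Icc a b) = expMeasure 1 (Ioc a b) := by
    apply le_antisymm
    · have hsub : Icc a b ⊆ Ioc a b ∪ {a} := by
        intro x hx
        rcases eq_or_lt_of_le hx.1 with h | h
        · exact Or.inr (by simp [h.symm])
        · exact Or.inl ⟨h, hx.2⟩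
      calc expMeasure 1 (Icc a b) ≤ expMeasure 1 (Ioc a b ∪ {a}) := measure_mono hsub
      _ ≤ expMeasure 1 (Ioc a b) + expMeasure 1 {a} := measure_union_le _ _
      _ = expMeasure 1 (Ioc a b) := by rw [aux_expMeasure_singleton, add_zero]
    · exact measure_mono Ioc_subset_Icc_self
  rw [h1, aux_expMeasure_Ioc ha.le hab, ENNReal.toReal_ofReal
    (by simp [Real.exp_le_exp.2 (neg_le_neg hab)])]

lemma aux_expMeasure_Ioi {b : ℝ} (hb : 0 ≤ b) :
    expMeasure 1 (Ioi b) = ENNReal.ofReal (Real.exp (-b)) := by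
  haveI := isProbabilityMeasure_expMeasure (r := (1:ℝ)) one_pos
  have h2 : Real.exp (-b) ≤ 1 := Real.exp_le_one_iff.2 (by linarith)
  have hc : Ioi b = (Iic b)ᶜ := compl_Iic.symm
  rw [hc, measure_compl measurableSet_Iic (measure_ne_top _ _), measure_univ,
    aux_expMeasure_Iic, if_pos hb, ← ENNReal.ofReal_one,
    ← ENNReal.ofReal_sub _ (by linarith)]
  norm_num

lemma aux_expMeasure_Ici {b : ℝ} (hb : 0 ≤ b) :
    expMeasure 1 (Ici b) = ENNReal.ofReal (Real.exp (-b)) := by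
  apply le_antisymm
  · have hsub : Ici b ⊆ Ioi b ∪ {b} := fun x hx => by
      rcases eq_or_lt_of_le (mem_Ici.mp hx) with h | h
      · exact Or.inr (by simp [h.symm])
      · exact Or.inl h
    calc expMeasure 1 (Ici b) ≤ expMeasure 1 (Ioi b ∪ {b}) := measure_mono hsub
    _ ≤ expMeasure 1 (Ioi b) + expMeasure 1 {b} := measure_union_le _ _
    _ = ENNReal.ofReal (Real.exp (-b)) := by
        rw [aux_expMeasure_singleton, add_zero, aux_expMeasure_Ioi hb]
  · rw [← aux_expMeasure_Ioi hb]
    exact measure_mono Ioi_subset_Ici_self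

noncomputable def htA (z : ℝ) : ℝ := 1 + z - Real.sqrt (z ^ 2 + 2 * z)
noncomputable def htB (z : ℝ) : ℝ := 1 + z + Real.sqrt (z ^ 2 + 2 * z)

lemma ht_nonpos {x : ℝ} (hx : x ≤ 0) : heavyTailFun x = 0 := by
  rw [heavyTailFun, Real.sqrt_eq_zero'.mpr hx]
  simp

lemma ht_pos {x : ℝ} (hx : 0 < x) : heavyTailFun x = (1 - x) ^ 2 / (2 * x) := by
  have hs : Real.sqrt x > 0 := Real.sqrt_pos.2 hx
  have hsq : Real.sqrt x ^ 2 = x := Real.sq_sqrt hx.le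
  rw [heavyTailFun]
  have : 1 / Real.sqrt x - Real.sqrt x = (1 - x) / Real.sqrt x := by
    field_simp; rw [hsq]
  rw [this, div_pow, hsq]
  ring

lemma ht_nonneg (x : ℝ) : 0 ≤ heavyTailFun x := by
  rw [heavyTailFun]; positivity

section
variable {z : ℝ} (hz : 0 ≤ z)

lemma htD_nonneg (hz : 0 ≤ z) : 0 ≤ z ^ 2 + 2 * z := by nlinarith

lemma htA_pos (hz : 0 ≤ z) : 0 < htA z := by
  rw [htA, sub_pos]
  have : Real.sqrt (z ^ 2 + 2 * z) < 1 + z := by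
    rw [Real.sqrt_lt' (by linarith)]
    nlinarith
  exact this

lemma htA_le_htB : htA z ≤ htB z := by
  rw [htA, htB]
  have := Real.sqrt_nonneg (z ^ 2 + 2 * z)
  linarith

lemma htA_lt_htB (hz : 0 < z) : htA z < htB z := by
  rw [htA, htB]
  have : 0 < Real.sqrt (z ^ 2 + 2 * z) := Real.sqrt_pos.2 (by nlinarith)
  linarith

lemma ht_factor (hz : 0 ≤ z) (x : ℝ) :
    (x - htA z) * (x - htB z) = x ^ 2 - (2 + 2 * z) * x + 1 := by
  have hsq : Real.sqrt (z ^ 2 + 2 * z) ^ 2 = z ^ 2 + 2 * z :=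
    Real.sq_sqrt (by nlinarith)
  rw [htA, htB]
  nlinarith [hsq]

lemma ht_le_iff (hz : 0 ≤ z) {x : ℝ} (hx : 0 < x) :
    heavyTailFun x ≤ z ↔ htA z ≤ x ∧ x ≤ htB z := by
  rw [ht_pos hx, div_le_iff₀ (by linarith)]
  have hfac := ht_factor hz x
  constructor
  · intro h
    have hprod : (x - htA z) * (x - htB z) ≤ 0 := by nlinarith
    have hAB := htA_le_htB (z := z)
    rcases mul_nonpos_iff.mp hprod with ⟨h1, h2⟩ | ⟨h1, h2⟩
    · constructor <;> nlinarith
    · constructor <;> linarith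
  · intro ⟨h1, h2⟩
    nlinarith [hfac]

lemma ht_ge_iff (hz : 0 ≤ z) {x : ℝ} (hx : 0 < x) :
    z ≤ heavyTailFun x ↔ x ≤ htA z ∨ htB z ≤ x := by
  rw [ht_pos hx, le_div_iff₀ (by linarith)]
  have hfac := ht_factor hz x
  have hAB := htA_le_htB (z := z)
  constructor
  · intro h
    have hprod : 0 ≤ (x - htA z) * (x - htB z) := by nlinarith
    rcases mul_nonneg_iff.mp hprod with ⟨h1, h2⟩ | ⟨h1, h2⟩
    · right; linarith
    · left; linarith
  · intro h
    rcases h with h | h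
    · nlinarith
    · nlinarith

lemma htA_mul_htB (hz : 0 ≤ z) : htA z * htB z = 1 := by
  have hsq : Real.sqrt (z ^ 2 + 2 * z) ^ 2 = z ^ 2 + 2 * z :=
    Real.sq_sqrt (by nlinarith)
  rw [htA, htB]
  nlinarith [hsq]

end

lemma ht_set_le {z : ℝ} (hz : 0 ≤ z) :
    {x : ℝ | heavyTailFun x ≤ z} = Iic 0 ∪ Icc (htA z) (htB z) := by
  ext x
  simp only [mem_setOf_eq, mem_union, mem_Iic, mem_Icc]
  rcases le_or_gt x 0 with hx | hx
  · simp [hx, ht_nonpos hx, hz]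
  · rw [ht_le_iff hz hx]
    constructor
    · exact fun h => Or.inr h
    · rintro (h | h)
      · linarith
      · exact h

lemma ht_meas_le {z : ℝ} (hz : 0 ≤ z) :
    (expMeasure 1 {x : ℝ | heavyTailFun x ≤ z}).toReal
      = Real.exp (-htA z) - Real.exp (-htB z) := by
  rw [ht_set_le hz]
  have h1 : expMeasure 1 (Iic 0 ∪ Icc (htA z) (htB z)) = expMeasure 1 (Icc (htA z) (htB z)) := by
    apply le_antisymm
    · calc expMeasure 1 (Iic 0 ∪ Icc (htA z) (htB z))
          ≤ expMeasure 1 (Iic 0) + expMeasure 1 (Icc (htA z) (htB z)) := measure_union_le _ _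
      _ = expMeasure 1 (Icc (htA z) (htB z)) := by rw [aux_expMeasure_Iic_zero, zero_add]
    · exact measure_mono subset_union_right
  rw [h1, aux_expMeasure_Icc (htA_pos hz) (htA_le_htB)]

lemma ht_set_ge {z : ℝ} (hz : 0 < z) :
    {x : ℝ | z ≤ heavyTailFun x} = Ioc 0 (htA z) ∪ Ici (htB z) := by
  ext x
  simp only [mem_setOf_eq, mem_union, mem_Ioc, mem_Ici]
  rcases le_or_gt x 0 with hx | hx
  · rw [ht_nonpos hx]
    have hb : 0 < htB z := lt_of_lt_of_le (htA_pos hz.le) (htA_le_htB)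
    constructor
    · intro h; linarith
    · rintro (h | h) <;> linarith
  · rw [ht_ge_iff hz.le hx]
    constructor
    · rintro (h | h)
      · exact Or.inl ⟨hx, h⟩
      · exact Or.inr h
    · rintro (⟨_, h⟩ | h)
      · exact Or.inl h
      · exact Or.inr h

lemma ht_meas_ge {z : ℝ} (hz : 0 < z) :
    (expMeasure 1 {x : ℝ | z ≤ heavyTailFun x}).toReal
      = (1 - Real.exp (-htA z)) + Real.exp (-htB z) := by
  rw [ht_set_ge hz]
  have hd : Disjoint (Ioc (0:ℝ) (htA z)) (Ici (htB z)) := by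
    rw [Set.disjoint_left]
    intro x hx1 hx2
    have := htA_lt_htB (z := z) hz
    have := hx1.2
    have := mem_Ici.mp hx2
    linarith
  rw [measure_union hd measurableSet_Ici,
    aux_expMeasure_Ioc le_rfl (htA_pos hz.le).le,
    aux_expMeasure_Ici (le_trans (htA_pos hz.le).le htA_le_htB)]
  rw [ENNReal.toReal_add (by simp) (by simp), ENNReal.toReal_ofReal, ENNReal.toReal_ofReal]
  · norm_num
  · positivity
  · have : Real.exp (-htA z) ≤ Real.exp (-0) := Real.exp_le_exp.2 (by linarith [htA_pos hz.le])
    simp at this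
    norm_num
    linarith


lemma aux_inv_tendsto : Tendsto (fun z : ℝ => z⁻¹) atTop (𝓝 0) := tendsto_inv_atTop_zero

lemma ht_twoZA : Tendsto (fun z : ℝ => 2 * z * htA z) atTop (𝓝 1) := by
  have h1 : Tendsto (fun z : ℝ => z⁻¹ + 1 + Real.sqrt (1 + 2 * z⁻¹)) atTop (𝓝 2) := by
    have ha : Tendsto (fun z : ℝ => z⁻¹ + 1) atTop (𝓝 1) := by
      simpa using tendsto_inv_atTop_zero.add (tendsto_const_nhds (x := (1:ℝ)))
    have hb : Tendsto (fun z : ℝ => Real.sqrt (1 + 2 * z⁻¹)) atTop (𝓝 1) := by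
      have : Tendsto (fun z : ℝ => 1 + 2 * z⁻¹) atTop (𝓝 1) := by
        simpa using (tendsto_const_nhds (x := (1:ℝ))).add
          (tendsto_inv_atTop_zero.const_mul 2)
      simpa [Function.comp_def] using (Real.continuous_sqrt.tendsto 1).comp this
    have := ha.add hb
    norm_num at this
    exact this
  have h2 : Tendsto (fun z : ℝ => 2 / (z⁻¹ + 1 + Real.sqrt (1 + 2 * z⁻¹))) atTop (𝓝 1) := by
    have := (tendsto_const_nhds (x := (2:ℝ))).div h1 (by norm_num)
    norm_num at this
    exact this
  apply h2.congr'
  filter_upwards [eventually_gt_atTop 0] with z hz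
  have hzne : z ≠ 0 := hz.ne'
  have hBpos : 0 < htB z := lt_of_lt_of_le (htA_pos hz.le) htA_le_htB
  have hAB : htA z = 1 / htB z := by
    field_simp
    linarith [htA_mul_htB hz.le]
  have hsq : Real.sqrt (1 + 2 * z⁻¹) = Real.sqrt (z ^ 2 + 2 * z) / z := by
    rw [show (1 + 2 * z⁻¹) = (z ^ 2 + 2 * z) / z ^ 2 by field_simp,
      Real.sqrt_div (by nlinarith) , Real.sqrt_sq hz.le]
  have hden : z⁻¹ + 1 + Real.sqrt (1 + 2 * z⁻¹) = htB z / z := by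
    rw [hsq, htB]
    field_simp
  rw [hden, hAB]
  field_simp

lemma ht_A_tendsto_zero : Tendsto htA atTop (𝓝 0) := by
  have h := ht_twoZA.mul (tendsto_inv_atTop_zero.const_mul (1/2 : ℝ))
  norm_num at h
  apply h.congr'
  filter_upwards [eventually_gt_atTop 0] with z hz
  have : z ≠ 0 := hz.ne'
  field_simp

lemma ht_tail_limit :
    Tendsto (fun z : ℝ => ((1 - Real.exp (-htA z)) + Real.exp (-htB z)) * (2 * z))
      atTop (𝓝 1) := by
  have main1 : Tendsto (fun z : ℝ => (1 - Real.exp (-htA z)) * (2 * z)) atTop (𝓝 1) := by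
    have hlo : Tendsto (fun z : ℝ => (2 * z * htA z) * Real.exp (-htA z)) atTop (𝓝 1) := by
      have he : Tendsto (fun z : ℝ => Real.exp (-htA z)) atTop (𝓝 1) := by
        have hneg : Tendsto (fun z : ℝ => -htA z) atTop (𝓝 0) := by
          simpa using ht_A_tendsto_zero.neg
        simpa [Function.comp_def] using (Real.continuous_exp.tendsto 0).comp hneg
      simpa using ht_twoZA.mul he
    have hhi : Tendsto (fun z : ℝ => 2 * z * htA z) atTop (𝓝 1) := ht_twoZA
    refine tendsto_of_tendsto_of_tendsto_of_le_of_le' hlo hhi ?_ ?_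
    · filter_upwards [eventually_gt_atTop 0] with z hz
      have hA := (htA_pos hz.le).le
      have h1 : htA z + 1 ≤ Real.exp (htA z) := Real.add_one_le_exp _
      have h2 : Real.exp (-htA z) * Real.exp (htA z) = 1 := by
        rw [← Real.exp_add]; simp
      have h3 : htA z * Real.exp (-htA z) ≤ 1 - Real.exp (-htA z) := by
        nlinarith [Real.exp_pos (-htA z)]
      nlinarith
    · filter_upwards [eventually_gt_atTop 0] with z hz
      have hA := (htA_pos hz.le).le
      have h1 : -htA z + 1 ≤ Real.exp (-htA z) := Real.add_one_le_exp _
      nlinarith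
  have main2 : Tendsto (fun z : ℝ => Real.exp (-htB z) * (2 * z)) atTop (𝓝 0) := by
    have hhi : Tendsto (fun z : ℝ => 2 * (z ^ 1 * Real.exp (-z))) atTop (𝓝 0) := by
      have := (tendsto_pow_mul_exp_neg_atTop_nhds_zero 1).const_mul (2:ℝ)
      simpa using this
    refine tendsto_of_tendsto_of_tendsto_of_le_of_le' (tendsto_const_nhds (x := (0:ℝ))) hhi ?_ ?_
    · filter_upwards [eventually_ge_atTop 0] with z hz
      positivity
    · filter_upwards [eventually_ge_atTop 0] with z hz
      have hB : z ≤ htB z := by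
        rw [htB]
        have := Real.sqrt_nonneg (z ^ 2 + 2 * z)
        linarith
      have : Real.exp (-htB z) ≤ Real.exp (-z) := Real.exp_le_exp.2 (by linarith)
      have hz2 : 0 ≤ 2 * z := by linarith
      calc Real.exp (-htB z) * (2 * z) ≤ Real.exp (-z) * (2 * z) := by
            exact mul_le_mul_of_nonneg_right this hz2
      _ = 2 * (z ^ 1 * Real.exp (-z)) := by ring
  have := main1.add main2
  norm_num at this
  apply this.congr
  intro z
  ring


section Prob
variable {Ω : Type*} [MeasurableSpace Ω] (μ : Measure Ω) [IsProbabilityMeasure μ]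
  (p : ℕ → Ω → ℝ) (hmeas : ∀ i, Measurable (p i))
  (hindep : iIndepFun (m := fun _ => (inferInstance : MeasurableSpace ℝ)) p μ)
  (hunif : ∀ i, Measure.map (p i) μ = volume.restrict (Set.Ioo (0:ℝ) 1))

include hmeas hindep hunif in
lemma aux_P_all (n : ℕ) (S : Set ℝ) (hS : MeasurableSet S) :
    μ {ω | ∀ i : Fin n, p i ω ∈ S} = (volume (S ∩ Ioo 0 1)) ^ n := by
  rw [aux_meas_all μ p hmeas hindep n S hS]
  have h : ∀ i ∈ Finset.range n, μ (p i ⁻¹' S) = volume (S ∩ Ioo 0 1) :=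
    fun i _ => aux_map_apply μ (p i) (hmeas i) (hunif i) S hS
  rw [Finset.prod_congr rfl h, Finset.prod_const, Finset.card_range]

lemma aux_vol_Ioi {t : ℝ} (ht : 0 ≤ t) :
    volume (Ioi t ∩ Ioo 0 1) = ENNReal.ofReal (1 - t) := by
  have : Ioi t ∩ Ioo 0 1 = Ioo t 1 := by
    ext x
    simp only [mem_inter_iff, mem_Ioi, mem_Ioo]
    exact ⟨fun ⟨h1, _, h3⟩ => ⟨h1, h3⟩, fun ⟨h1, h2⟩ => ⟨h1, lt_of_le_of_lt ht h1, h2⟩⟩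
  rw [this, Real.volume_Ioo]

lemma aux_vol_Ici {t : ℝ} (ht : 0 ≤ t) :
    volume (Ici t ∩ Ioo 0 1) = ENNReal.ofReal (1 - t) := by
  have hle : volume (Ici t ∩ Ioo 0 1) ≤ volume (Ico t 1) := by
    apply measure_mono
    rintro x ⟨h1, _, h3⟩
    exact ⟨h1, h3⟩
  have hge : volume (Ioo t 1) ≤ volume (Ici t ∩ Ioo 0 1) := by
    apply measure_mono
    rintro x ⟨h1, h2⟩
    exact ⟨h1.le, lt_of_le_of_lt ht h1, h2⟩
  rw [Real.volume_Ico] at hle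
  rw [Real.volume_Ioo] at hge
  exact le_antisymm hle hge

include hmeas hindep hunif in
lemma aux_Pgt {n : ℕ} (hn : 0 < n) {t : ℝ} (ht : 0 ≤ t) :
    μ {ω | t < ⨅ i : Fin n, p i ω} = ENNReal.ofReal (1 - t) ^ n := by
  have hset : {ω | t < ⨅ i : Fin n, p i ω} = {ω | ∀ i : Fin n, p i ω ∈ Ioi t} := by
    ext ω; exact aux_lt_iInf hn (fun i => p i ω) t
  rw [hset, aux_P_all μ p hmeas hindep hunif n _ measurableSet_Ioi, aux_vol_Ioi ht]

include hmeas hindep hunif in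
lemma aux_Pge {n : ℕ} (hn : 0 < n) {t : ℝ} (ht : 0 ≤ t) :
    μ {ω | t ≤ ⨅ i : Fin n, p i ω} = ENNReal.ofReal (1 - t) ^ n := by
  have hset : {ω | t ≤ ⨅ i : Fin n, p i ω} = {ω | ∀ i : Fin n, p i ω ∈ Ici t} := by
    ext ω; exact aux_le_iInf hn (fun i => p i ω) t
  rw [hset, aux_P_all μ p hmeas hindep hunif n _ measurableSet_Ici, aux_vol_Ici ht]

include hmeas in
lemma aux_meas_iInf (n : ℕ) : Measurable (fun ω => ⨅ i : Fin n, p i ω) :=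
  Measurable.iInf (fun i => hmeas i)

include hmeas hindep hunif in
lemma aux_PleR {n : ℕ} (hn : 0 < n) {t : ℝ} (ht0 : 0 ≤ t) (ht1 : t ≤ 1) :
    (μ {ω | (⨅ i : Fin n, p i ω) ≤ t}).toReal = 1 - (1 - t) ^ n := by
  have hc : {ω | (⨅ i : Fin n, p i ω) ≤ t} = {ω | t < ⨅ i : Fin n, p i ω}ᶜ := by
    ext ω; simp [not_lt]
  have hm : MeasurableSet {ω | t < ⨅ i : Fin n, p i ω} :=
    (aux_meas_iInf p hmeas n) measurableSet_Ioi
  rw [hc, measure_compl hm (measure_ne_top _ _), measure_univ,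
    aux_Pgt μ p hmeas hindep hunif hn ht0,
    ENNReal.toReal_sub_of_le (by
      calc ENNReal.ofReal (1 - t) ^ n ≤ 1 ^ n := by
            apply pow_le_pow_left' (by simp [ENNReal.ofReal_le_one]; linarith)
      _ = 1 := one_pow n) (by simp)]
  rw [ENNReal.toReal_pow, ENNReal.toReal_ofReal (by linarith)]
  simp

include hmeas hindep hunif in
lemma aux_PltR {n : ℕ} (hn : 0 < n) {t : ℝ} (ht0 : 0 ≤ t) (ht1 : t ≤ 1) :
    (μ {ω | (⨅ i : Fin n, p i ω) < t}).toReal = 1 - (1 - t) ^ n := by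
  have hc : {ω | (⨅ i : Fin n, p i ω) < t} = {ω | t ≤ ⨅ i : Fin n, p i ω}ᶜ := by
    ext ω; simp [not_le]
  have hm : MeasurableSet {ω | t ≤ ⨅ i : Fin n, p i ω} :=
    (aux_meas_iInf p hmeas n) measurableSet_Ici
  rw [hc, measure_compl hm (measure_ne_top _ _), measure_univ,
    aux_Pge μ p hmeas hindep hunif hn ht0,
    ENNReal.toReal_sub_of_le (by
      calc ENNReal.ofReal (1 - t) ^ n ≤ 1 ^ n := by
            apply pow_le_pow_left' (by simp [ENNReal.ofReal_le_one]; linarith)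
      _ = 1 := one_pow n) (by simp)]
  rw [ENNReal.toReal_pow, ENNReal.toReal_ofReal (by linarith)]
  simp

include hmeas hindep hunif in
lemma aux_PIccR {n : ℕ} (hn : 0 < n) {a b : ℝ} (ha : 0 ≤ a) (hab : a ≤ b) (hb : b ≤ 1) :
    (μ {ω | a ≤ (⨅ i : Fin n, p i ω) ∧ (⨅ i : Fin n, p i ω) ≤ b}).toReal
      = (1 - a) ^ n - (1 - b) ^ n := by
  have hmi := aux_meas_iInf p hmeas n
  have hu : {ω | (⨅ i : Fin n, p i ω) < a} ∪
      {ω | a ≤ (⨅ i : Fin n, p i ω) ∧ (⨅ i : Fin n, p i ω) ≤ b}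
      = {ω | (⨅ i : Fin n, p i ω) ≤ b} := by
    ext ω
    simp only [mem_union, mem_setOf_eq]
    constructor
    · rintro (h | h)
      · exact le_trans h.le (by linarith)
      · exact h.2
    · intro h
      rcases lt_or_ge (⨅ i : Fin n, p i ω) a with h2 | h2
      · exact Or.inl h2
      · exact Or.inr ⟨h2, h⟩
  have hd : Disjoint {ω | (⨅ i : Fin n, p i ω) < a}
      {ω | a ≤ (⨅ i : Fin n, p i ω) ∧ (⨅ i : Fin n, p i ω) ≤ b} := by
    rw [Set.disjoint_left]
    rintro ω h1 ⟨h2, _⟩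
    exact absurd h2 (not_le.mpr h1)
  have hmset : MeasurableSet {ω | a ≤ (⨅ i : Fin n, p i ω) ∧ (⨅ i : Fin n, p i ω) ≤ b} := by
    have : {ω | a ≤ (⨅ i : Fin n, p i ω) ∧ (⨅ i : Fin n, p i ω) ≤ b}
        = (fun ω => ⨅ i : Fin n, p i ω) ⁻¹' (Icc a b) := rfl
    rw [this]
    exact hmi measurableSet_Icc
  have hadd := measure_union (μ := μ) hd hmset
  rw [hu] at hadd
  have h1 := aux_PleR μ p hmeas hindep hunif hn (le_trans ha hab) hb
  have h2 := aux_PltR μ p hmeas hindep hunif hn ha (le_trans hab hb)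
  have hfin1 : μ {ω | (⨅ i : Fin n, p i ω) < a} ≠ ⊤ := measure_ne_top _ _
  have hfin2 : μ {ω | a ≤ (⨅ i : Fin n, p i ω) ∧ (⨅ i : Fin n, p i ω) ≤ b} ≠ ⊤ :=
    measure_ne_top _ _
  have := congrArg ENNReal.toReal hadd
  rw [ENNReal.toReal_add hfin1 hfin2, h1, h2] at this
  linarith

end Prob


lemma aux_quad_facts {z : ℝ} (hz : 0 ≤ z) {n : ℕ} (hn : 3 ≤ n) :
    0 ≤ (1 + z) ^ 2 - 1 - 2 * z / (n : ℝ) ∧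
    Real.sqrt ((1 + z) ^ 2 - 1 - 2 * z / (n : ℝ)) ≤ 1 + z ∧
    (0 : ℝ) < (n : ℝ) + 2 * z := by
  have hn3 : (3 : ℝ) ≤ (n : ℝ) := by exact_mod_cast hn
  have hdiv : 2 * z / (n : ℝ) ≤ 2 * z := div_le_self (by linarith) (by linarith)
  have hdivnn : 0 ≤ 2 * z / (n : ℝ) := by positivity
  have hdn : 0 ≤ (1 + z) ^ 2 - 1 - 2 * z / (n : ℝ) := by nlinarith
  refine ⟨hdn, ?_, by linarith⟩
  have h1 : (1 + z) ^ 2 - 1 - 2 * z / (n : ℝ) ≤ (1 + z) ^ 2 := by linarith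
  calc Real.sqrt ((1 + z) ^ 2 - 1 - 2 * z / (n : ℝ)) ≤ Real.sqrt ((1 + z) ^ 2) :=
        Real.sqrt_le_sqrt h1
  _ = 1 + z := Real.sqrt_sq (by linarith)

lemma aux_quad_iff {z : ℝ} (hz : 0 ≤ z) {n : ℕ} (hn : 3 ≤ n) {m : ℝ}
    (hm0 : 0 < m) (hm1 : m < 1) :
    (1 / 2) * (n : ℝ) * ((1 / (n : ℝ) - m) ^ 2 / (m * (1 - m))) ≤ z ↔
      ((1 + z) - Real.sqrt ((1 + z) ^ 2 - 1 - 2 * z / (n : ℝ))) / ((n : ℝ) + 2 * z) ≤ m ∧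
      m ≤ ((1 + z) + Real.sqrt ((1 + z) ^ 2 - 1 - 2 * z / (n : ℝ))) / ((n : ℝ) + 2 * z) := by
  obtain ⟨hdn, hsle, hNpos⟩ := aux_quad_facts hz hn
  set s := Real.sqrt ((1 + z) ^ 2 - 1 - 2 * z / (n : ℝ)) with hs
  have hs0 : 0 ≤ s := Real.sqrt_nonneg _
  have hssq : s ^ 2 = (1 + z) ^ 2 - 1 - 2 * z / (n : ℝ) := Real.sq_sqrt hdn
  have hn3 : (3 : ℝ) ≤ (n : ℝ) := by exact_mod_cast hn
  have hnne : (n : ℝ) ≠ 0 := by linarith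
  have hNne : (n : ℝ) + 2 * z ≠ 0 := hNpos.ne'
  have hm1' : 0 < m * (1 - m) := by nlinarith
  have e1 : (1 / 2) * (n : ℝ) * ((1 / (n : ℝ) - m) ^ 2 / (m * (1 - m)))
      = ((1 / 2) * (n : ℝ) * (1 / (n : ℝ) - m) ^ 2) / (m * (1 - m)) := by ring
  have hfact : (1 / 2) * (n : ℝ) * (1 / (n : ℝ) - m) ^ 2 - z * (m * (1 - m))
      = ((((n : ℝ) + 2 * z) * m - (1 + z)) ^ 2 - s ^ 2) / (2 * ((n : ℝ) + 2 * z)) := by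
    rw [hssq]
    field_simp
    ring
  set u := ((n : ℝ) + 2 * z) * m - (1 + z) with hu
  have step1 : (1 / 2) * (n : ℝ) * ((1 / (n : ℝ) - m) ^ 2 / (m * (1 - m))) ≤ z
      ↔ u ^ 2 ≤ s ^ 2 := by
    rw [e1, div_le_iff₀ hm1']
    constructor
    · intro h
      have h2 : (u ^ 2 - s ^ 2) / (2 * ((n : ℝ) + 2 * z)) ≤ 0 := by
        rw [← hfact]; linarith
      have h3 : (0:ℝ) < 2 * ((n : ℝ) + 2 * z) := by linarith
      by_contra hc
      push_neg at hc
      have h4 : 0 < (u ^ 2 - s ^ 2) / (2 * ((n : ℝ) + 2 * z)) :=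
        div_pos (by linarith) h3
      linarith
    · intro h
      have h2 : (u ^ 2 - s ^ 2) / (2 * ((n : ℝ) + 2 * z)) ≤ 0 :=
        div_nonpos_of_nonpos_of_nonneg (by linarith) (by linarith)
      linarith [hfact, h2]
  have step2 : u ^ 2 ≤ s ^ 2 ↔ (-s ≤ u ∧ u ≤ s) :=
    ⟨fun h => abs_le_of_sq_le_sq' h hs0, fun ⟨h1, h2⟩ => sq_le_sq' h1 h2⟩
  have step3 : (-s ≤ u ∧ u ≤ s) ↔
      (((1 + z) - s) / ((n : ℝ) + 2 * z) ≤ m ∧ m ≤ ((1 + z) + s) / ((n : ℝ) + 2 * z)) := by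
    rw [div_le_iff₀ hNpos, le_div_iff₀ hNpos, hu]
    constructor
    · intro ⟨h1, h2⟩
      constructor <;> linarith
    · intro ⟨h1, h2⟩
      constructor <;> linarith
  rw [step1, step2, step3]

lemma aux_rate_tendsto (z c : ℝ) (hz : 0 ≤ z) :
    Tendsto (fun n : ℕ =>
        (n : ℝ) * (((1 + z) + c * Real.sqrt ((1 + z) ^ 2 - 1 - 2 * z / (n : ℝ)))
          / ((n : ℝ) + 2 * z)))
      atTop (𝓝 ((1 + z) + c * Real.sqrt (z ^ 2 + 2 * z))) := by
  have hinv : Tendsto (fun n : ℕ => 2 * z / (n : ℝ)) atTop (𝓝 0) := by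
    have := tendsto_one_div_atTop_nhds_zero_nat.const_mul (2 * z)
    simpa [mul_one_div, div_eq_mul_inv] using this
  have hsqrt : Tendsto (fun n : ℕ => Real.sqrt ((1 + z) ^ 2 - 1 - 2 * z / (n : ℝ)))
      atTop (𝓝 (Real.sqrt (z ^ 2 + 2 * z))) := by
    have hbase : Tendsto (fun n : ℕ => (1 + z) ^ 2 - 1 - 2 * z / (n : ℝ))
        atTop (𝓝 (z ^ 2 + 2 * z)) := by
      have := (tendsto_const_nhds (x := (1 + z) ^ 2 - 1)).sub hinv
      rw [sub_zero] at this
      convert this using 2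
      ring
    exact (Real.continuous_sqrt.tendsto _).comp hbase
  have hnum : Tendsto (fun n : ℕ => (1 + z) + c * Real.sqrt ((1 + z) ^ 2 - 1 - 2 * z / (n : ℝ)))
      atTop (𝓝 ((1 + z) + c * Real.sqrt (z ^ 2 + 2 * z))) :=
    (tendsto_const_nhds).add (hsqrt.const_mul c)
  have hratio : Tendsto (fun n : ℕ => (n : ℝ) / ((n : ℝ) + 2 * z)) atTop (𝓝 1) := by
    have h1 : Tendsto (fun n : ℕ => 1 + 2 * z / (n : ℝ)) atTop (𝓝 1) := by
      have := (tendsto_const_nhds (x := (1:ℝ))).add hinv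
      rw [add_zero] at this
      exact this
    have h2 := (tendsto_const_nhds (x := (1:ℝ))).div h1 (by norm_num)
    rw [div_one] at h2
    apply h2.congr'
    filter_upwards [eventually_ge_atTop 1] with n hn
    have hn1 : (1:ℝ) ≤ (n : ℝ) := by exact_mod_cast hn
    have : (n : ℝ) ≠ 0 := by linarith
    have hden : (n : ℝ) + 2 * z ≠ 0 := by positivity
    simp only [Pi.div_apply]
    field_simp
  have := hnum.mul hratio
  rw [mul_one] at this
  apply this.congr
  intro n
  ring

/-- **Heavy tail of the untruncated GoF statistic.** For i.i.d. `Uniform(0,1)`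
variables `p 0, p 1, …` with minimum `p_(1)` of the first `n`:
(a) `n·p_(1)` converges in distribution to an `Exponential(1)` variable `E`;
(b) the statistic `n·K₂(1/n, p_(1)) = (1/2) n (1/n − p_(1))²/(p_(1)(1−p_(1)))`
converges in distribution to `(1/2)(1/√E − √E)²`;
(c) the limiting tail satisfies `P((1/2)(1/√E − √E)² ≥ z) ~ 1/(2z)` as `z → ∞`. -/
theorem untruncated_GoF_heavy_tail {Ω : Type*} [MeasurableSpace Ω]
    (μ : Measure Ω) [IsProbabilityMeasure μ]
    (p : ℕ → Ω → ℝ) (hmeas : ∀ i, Measurable (p i))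
    (hindep : iIndepFun (m := fun _ => (inferInstance : MeasurableSpace ℝ)) p μ)
    (hunif : ∀ i, Measure.map (p i) μ = volume.restrict (Set.Ioo (0:ℝ) 1)) :
    (∀ z : ℝ, Tendsto (fun n : ℕ =>
        (μ {ω | (n : ℝ) * (⨅ i : Fin n, p i ω) ≤ z}).toReal)
      atTop (𝓝 ((expMeasure 1 (Set.Iic z)).toReal))) ∧
    (∀ z : ℝ, Tendsto (fun n : ℕ =>
        (μ {ω | (1 / 2) * (n : ℝ) *
            ((1 / (n : ℝ) - ⨅ i : Fin n, p i ω) ^ 2 /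
              ((⨅ i : Fin n, p i ω) * (1 - ⨅ i : Fin n, p i ω))) ≤ z}).toReal)
      atTop (𝓝 ((expMeasure 1 {x | heavyTailFun x ≤ z}).toReal))) ∧
    Tendsto (fun z : ℝ => (expMeasure 1 {x | z ≤ heavyTailFun x}).toReal * (2 * z))
      atTop (𝓝 1) := by

  -- the a.s. event that all coordinates lie in (0,1)
  have hH : μ {ω | ∀ i : ℕ, p i ω ∈ Ioo (0:ℝ) 1}ᶜ = 0 := by
    have hc : {ω | ∀ i : ℕ, p i ω ∈ Ioo (0:ℝ) 1}ᶜ = ⋃ i : ℕ, p i ⁻¹' (Ioo (0:ℝ) 1)ᶜ := by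
      ext ω
      simp [mem_compl_iff, mem_setOf_eq, not_forall]
    rw [hc]
    apply measure_iUnion_null
    intro i
    rw [aux_map_apply μ (p i) (hmeas i) (hunif i) _ measurableSet_Ioo.compl]
    rw [Set.compl_inter_self]
    exact measure_empty
  have hHmem : ∀ {n : ℕ}, 0 < n → ∀ {ω}, ω ∈ {ω | ∀ i : ℕ, p i ω ∈ Ioo (0:ℝ) 1} →
      0 < (⨅ i : Fin n, p i ω) ∧ (⨅ i : Fin n, p i ω) < 1 := by
    intro n hn ω hω
    obtain ⟨j, hj1, hj2⟩ := aux_exists_min hn (fun i : Fin n => p i ω)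
    constructor
    · rw [hj1]; exact (hω j).1
    · rw [hj1]; exact (hω j).2
  refine ⟨?_, ?_, ?_⟩
  · -- Part (a)
    intro z
    rcases lt_or_ge z 0 with hz | hz
    · have htarget : (expMeasure 1 (Iic z)).toReal = 0 := by
        rw [aux_expMeasure_Iic, if_neg (not_le.mpr hz)]
        simp
      rw [htarget]
      apply Tendsto.congr' _ tendsto_const_nhds
      filter_upwards [eventually_ge_atTop 1] with n hn
      have hn' : 0 < n := hn
      have hsub : {ω | (n : ℝ) * (⨅ i : Fin n, p i ω) ≤ z}
          ⊆ {ω | (⨅ i : Fin n, p i ω) < 0} := by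
        intro ω hω
        simp only [mem_setOf_eq] at hω ⊢
        have hnpos : (0:ℝ) < (n : ℝ) := by exact_mod_cast hn'
        nlinarith
      have h0 : μ {ω | (⨅ i : Fin n, p i ω) < 0} = 0 := by
        have ht := aux_PltR μ p hmeas hindep hunif hn' (le_refl (0:ℝ)) zero_le_one
        simp only [sub_zero, one_pow] at ht
        have : (μ {ω | (⨅ i : Fin n, p i ω) < 0}).toReal = 0 := by rw [ht]; ring
        exact (ENNReal.toReal_eq_zero_iff _).mp this |>.resolve_right (measure_ne_top _ _)
      have h00 := measure_mono_null hsub h0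
      rw [h00]
      simp
    · have htarget : (expMeasure 1 (Iic z)).toReal = 1 - Real.exp (-z) := by
        rw [aux_expMeasure_Iic, if_pos hz, ENNReal.toReal_ofReal]
        have : Real.exp (-z) ≤ 1 := Real.exp_le_one_iff.2 (by linarith)
        linarith
      rw [htarget]
      have hpow : Tendsto (fun n : ℕ => (1 - z / (n : ℝ)) ^ n) atTop
          (𝓝 (Real.exp (-z))) := by
        apply aux_tendsto_pow_exp
        · apply Tendsto.congr' _ (tendsto_const_nhds (x := z))
          filter_upwards [eventually_ge_atTop 1] with n hn
          have : (n : ℝ) ≠ 0 := by positivity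
          field_simp
        · filter_upwards [tendsto_natCast_atTop_atTop.eventually_gt_atTop z,
            eventually_ge_atTop 1] with n hn hn1
          have hnpos : (0:ℝ) < (n:ℝ) := by exact_mod_cast hn1
          constructor
          · positivity
          · rw [div_lt_one hnpos]; exact hn
      have hlim := (tendsto_const_nhds (x := (1:ℝ))).sub hpow
      apply Tendsto.congr' _ hlim
      filter_upwards [tendsto_natCast_atTop_atTop.eventually_gt_atTop z,
        eventually_ge_atTop 1] with n hn hn1
      have hn' : 0 < n := hn1
      have hnpos : (0:ℝ) < (n:ℝ) := by exact_mod_cast hn1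
      have hset : {ω | (n : ℝ) * (⨅ i : Fin n, p i ω) ≤ z}
          = {ω | (⨅ i : Fin n, p i ω) ≤ z / (n : ℝ)} := by
        ext ω
        simp only [mem_setOf_eq]
        rw [← le_div_iff₀' hnpos]
      rw [hset, aux_PleR μ p hmeas hindep hunif hn' (by positivity)
        ((div_le_one hnpos).mpr hn.le)]
  · -- Part (b)
    intro z
    rcases lt_or_ge z 0 with hz | hz
    · have htarget : (expMeasure 1 {x : ℝ | heavyTailFun x ≤ z}).toReal = 0 := by
        have : {x : ℝ | heavyTailFun x ≤ z} = ∅ := by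
          ext x
          simp only [mem_setOf_eq, mem_empty_iff_false, iff_false, not_le]
          exact lt_of_lt_of_le hz (ht_nonneg x)
        rw [this]
        simp
      rw [htarget]
      apply Tendsto.congr' _ tendsto_const_nhds
      filter_upwards [eventually_ge_atTop 1] with n hn
      have hn' : 0 < n := hn
      have hzero : μ {ω | (1 / 2) * (n : ℝ) *
          ((1 / (n : ℝ) - ⨅ i : Fin n, p i ω) ^ 2 /
            ((⨅ i : Fin n, p i ω) * (1 - ⨅ i : Fin n, p i ω))) ≤ z} = 0 := by
        rw [← measure_inter_conull hH]
        have : {ω | (1 / 2) * (n : ℝ) *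
            ((1 / (n : ℝ) - ⨅ i : Fin n, p i ω) ^ 2 /
              ((⨅ i : Fin n, p i ω) * (1 - ⨅ i : Fin n, p i ω))) ≤ z}
            ∩ {ω | ∀ i : ℕ, p i ω ∈ Ioo (0:ℝ) 1} = ∅ := by
          ext ω
          simp only [mem_inter_iff, mem_setOf_eq, mem_empty_iff_false, iff_false, not_and]
          intro hle hω
          obtain ⟨hm0, hm1⟩ := hHmem hn' hω
          have hpos : 0 ≤ (1 / 2) * (n : ℝ) *
              ((1 / (n : ℝ) - ⨅ i : Fin n, p i ω) ^ 2 /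
                ((⨅ i : Fin n, p i ω) * (1 - ⨅ i : Fin n, p i ω))) := by
            have h1 : 0 < (⨅ i : Fin n, p i ω) * (1 - ⨅ i : Fin n, p i ω) := by nlinarith
            positivity
          linarith
        rw [this]
        exact measure_empty
      rw [hzero]
      simp
    · -- z ≥ 0 : main case
      set s : ℕ → ℝ := fun n => Real.sqrt ((1 + z) ^ 2 - 1 - 2 * z / (n : ℝ)) with hs
      set mlo : ℕ → ℝ := fun n => ((1 + z) - s n) / ((n : ℝ) + 2 * z) with hmlo
      set mhi : ℕ → ℝ := fun n => ((1 + z) + s n) / ((n : ℝ) + 2 * z) with hmhi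
      have hfacts : ∀ {n : ℕ}, 3 ≤ n → 0 ≤ mlo n ∧ mlo n ≤ mhi n ∧ mhi n < 1 := by
        intro n hn
        obtain ⟨hdn, hsle, hNpos⟩ := aux_quad_facts hz hn
        have hs0 : 0 ≤ s n := Real.sqrt_nonneg _
        have hn3 : (3 : ℝ) ≤ (n : ℝ) := by exact_mod_cast hn
        refine ⟨div_nonneg (by linarith) hNpos.le, ?_, ?_⟩
        · simp only [hmlo, hmhi]
          exact (div_le_div_iff_of_pos_right hNpos).mpr (by linarith)
        · simp only [hmhi]
          rw [div_lt_one hNpos]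
          linarith
      have hlo_t : Tendsto (fun n : ℕ => (n : ℝ) * mlo n) atTop (𝓝 (htA z)) := by
        have h := aux_rate_tendsto z (-1) hz
        have he : (1 + z) + (-1) * Real.sqrt (z ^ 2 + 2 * z) = htA z := by rw [htA]; ring
        rw [← he]
        apply h.congr
        intro n
        simp only [hmlo, hs]
        ring
      have hhi_t : Tendsto (fun n : ℕ => (n : ℝ) * mhi n) atTop (𝓝 (htB z)) := by
        have h := aux_rate_tendsto z 1 hz
        have he : (1 + z) + 1 * Real.sqrt (z ^ 2 + 2 * z) = htB z := by rw [htB]; ring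
        rw [← he]
        apply h.congr
        intro n
        simp only [hmhi, hs]
        ring
      have hpowlo : Tendsto (fun n : ℕ => (1 - mlo n) ^ n) atTop
          (𝓝 (Real.exp (-htA z))) := by
        apply aux_tendsto_pow_exp hlo_t
        filter_upwards [eventually_ge_atTop 3] with n hn
        obtain ⟨h1, h2, h3⟩ := hfacts hn
        exact ⟨h1, lt_of_le_of_lt h2 h3⟩
      have hpowhi : Tendsto (fun n : ℕ => (1 - mhi n) ^ n) atTop
          (𝓝 (Real.exp (-htB z))) := by
        apply aux_tendsto_pow_exp hhi_t
        filter_upwards [eventually_ge_atTop 3] with n hn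
        obtain ⟨h1, h2, h3⟩ := hfacts hn
        exact ⟨le_trans h1 h2, h3⟩
      rw [ht_meas_le hz]
      apply Tendsto.congr' _ (hpowlo.sub hpowhi)
      filter_upwards [eventually_ge_atTop 3] with n hn
      obtain ⟨h0lo, hlohi, hhi1⟩ := hfacts hn
      have hn' : 0 < n := by omega
      have hEI : μ {ω | (1 / 2) * (n : ℝ) *
          ((1 / (n : ℝ) - ⨅ i : Fin n, p i ω) ^ 2 /
            ((⨅ i : Fin n, p i ω) * (1 - ⨅ i : Fin n, p i ω))) ≤ z}
          = μ {ω | mlo n ≤ (⨅ i : Fin n, p i ω) ∧ (⨅ i : Fin n, p i ω) ≤ mhi n} := by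
        rw [← measure_inter_conull (s := {ω | (1 / 2) * (n : ℝ) *
          ((1 / (n : ℝ) - ⨅ i : Fin n, p i ω) ^ 2 /
            ((⨅ i : Fin n, p i ω) * (1 - ⨅ i : Fin n, p i ω))) ≤ z}) hH,
          ← measure_inter_conull (s := {ω | mlo n ≤ (⨅ i : Fin n, p i ω) ∧
            (⨅ i : Fin n, p i ω) ≤ mhi n}) hH]
        congr 1
        ext ω
        simp only [mem_inter_iff, mem_setOf_eq]
        constructor
        · rintro ⟨h1, h2⟩
          obtain ⟨hm0, hm1⟩ := hHmem hn' h2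
          exact ⟨(aux_quad_iff hz hn hm0 hm1).mp h1, h2⟩
        · rintro ⟨h1, h2⟩
          obtain ⟨hm0, hm1⟩ := hHmem hn' h2
          exact ⟨(aux_quad_iff hz hn hm0 hm1).mpr h1, h2⟩
      rw [hEI, aux_PIccR μ p hmeas hindep hunif hn' h0lo hlohi hhi1.le]
  · -- Part (c)
    apply Tendsto.congr' _ ht_tail_limit
    filter_upwards [eventually_gt_atTop 0] with z hz
    rw [ht_meas_ge hz]
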